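/- Let F : S → ℂ be a map on a subset S of ℂ satisfying |F(Z) − (Z + 1)| < ε for all Z ∈ S, with 0 < ε < 1. If Z₀ ∈ S and the forward orbit Z_k = F(Z_k−1) stays in S for k = 1,…,N, then each Z_k lies in the cone C⁺_ε(Z₀) = {Z₀ + R e^{iθ} : R > 0, |θ| < arcsin ε}, and Re(Z_k) ≥ Re(Z₀) + k(1 − ε). -/

import Mathlib

open Complex Set

/-- if `|F(Z) - (Z+1)| < ε` on `S` with `0 < ε < 1`, and the orbit
`Z_{k+1} = F(Z_k)` satisfies `Z_k ∈ S` for `0 ≤ k ≤ N-1`, then for `1 ≤ k ≤ N` the point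
`Z_k` lies in the cone `C⁺_ε(Z₀)` and `Re(Z_k) ≥ Re(Z₀) + k(1-ε)`. -/
theorem orbit_in_cone
    (S : Set ℂ) (F : ℂ → ℂ) (ε : ℝ) (hε0 : 0 < ε) (hε1 : ε < 1)
    (hF : ∀ W ∈ S, ‖F W - (W + 1)‖ < ε)
    (Z : ℕ → ℂ) (N : ℕ) (hstep : ∀ k, Z (k+1) = F (Z k))
    (horb : ∀ k < N, Z k ∈ S) :
    ∀ k, 1 ≤ k → k ≤ N →
      (∃ R θ : ℝ, 0 < R ∧ |θ| < Real.arcsin ε ∧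
        Z k = Z 0 + (R : ℂ) * Complex.exp (Complex.I * (θ : ℂ))) ∧
      (Z 0).re + k * (1 - ε) ≤ (Z k).re := by
  -- key estimate : |Z k - Z 0 - k| < k * ε  for 1 ≤ k ≤ N
  have key : ∀ k, k ≤ N → 1 ≤ k → ‖Z k - Z 0 - (k : ℂ)‖ < k * ε := by
    intro k
    induction k with
    | zero => omega
    | succ m ih =>
      intro hkN _
      have hmS : Z m ∈ S := horb m (by omega)
      have hFm := hF (Z m) hmS
      have hrw : Z (m+1) - Z 0 - ((m+1 : ℕ) : ℂ)
          = (F (Z m) - (Z m + 1)) + (Z m - Z 0 - (m : ℂ)) := by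
        rw [hstep m]; push_cast; ring
      have htri : ‖Z (m+1) - Z 0 - ((m+1 : ℕ) : ℂ)‖
          ≤ ‖F (Z m) - (Z m + 1)‖ + ‖Z m - Z 0 - (m : ℂ)‖ := by
        rw [hrw]; exact norm_add_le _ _
      rcases Nat.eq_zero_or_pos m with hm0 | hm1
      · subst hm0
        simpa using lt_of_le_of_lt (by simpa using htri) (by linarith)
      · have hm := ih (by omega) hm1
        have : ‖Z (m+1) - Z 0 - ((m+1 : ℕ) : ℂ)‖ < ε + m * ε :=
          lt_of_le_of_lt htri (by linarith)
        calc ‖Z (m+1) - Z 0 - ((m+1 : ℕ) : ℂ)‖ < ε + m * ε := this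
          _ = (m+1 : ℕ) * ε := by push_cast; ring
  intro k hk1 hkN
  set W : ℂ := Z k - Z 0 with hW
  have hk0 : (0 : ℝ) < k := by exact_mod_cast hk1
  have hkey : ‖W - (k : ℂ)‖ < k * ε := by
    simpa [hW, sub_sub] using key k hkN hk1
  have hsq : (W.re - k) ^ 2 + W.im ^ 2 < (k * ε) ^ 2 := by
    have h1 : ‖W - (k : ℂ)‖ ^ 2 < (k * ε) ^ 2 := by
      nlinarith [norm_nonneg (W - (k : ℂ))]
    have h2 : ‖W - (k : ℂ)‖ ^ 2 = (W.re - k) ^ 2 + W.im ^ 2 := by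
      rw [Complex.sq_norm, Complex.normSq_apply]
      simp
      ring
    linarith [h2 ▸ h1]
  have hx : k * (1 - ε) < W.re := by
    nlinarith [sq_nonneg W.im, mul_pos hk0 hε0, sq_nonneg (W.re - k + k * ε)]
  have hxpos : 0 < W.re := by nlinarith [mul_pos hk0 hε0]
  have hre : (Z 0).re + k * (1 - ε) ≤ (Z k).re := by
    have hx2 : W.re = (Z k).re - (Z 0).re := by simp [hW]
    linarith [hx2 ▸ hx]
  refine ⟨?_, hre⟩
  have hWne : W ≠ 0 := by
    intro h
    rw [h] at hxpos
    simp at hxpos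
  have habs : 0 < ‖W‖ := norm_pos_iff.mpr hWne
  have habs2 : ‖W‖ ^ 2 = W.re ^ 2 + W.im ^ 2 := by
    rw [Complex.sq_norm, Complex.normSq_apply]; ring
  have hy2 : W.im ^ 2 < ε ^ 2 * ‖W‖ ^ 2 := by
    rw [habs2]
    have h1ε : (0:ℝ) < 1 - ε ^ 2 := by nlinarith
    nlinarith [mul_lt_mul_of_pos_left hsq h1ε, sq_nonneg (W.re - k + k * ε ^ 2)]
  have hylt : |W.im| < ε * ‖W‖ := by
    nlinarith [abs_nonneg W.im, _root_.sq_abs W.im, mul_pos hε0 habs]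
  set θ : ℝ := Complex.arg W with hθ
  have hsinθ : Real.sin θ = W.im / ‖W‖ := Complex.sin_arg W
  have hargpi : |θ| < Real.pi / 2 :=
    Complex.abs_arg_lt_pi_div_two_iff.mpr (Or.inl hxpos)
  have hsinabs : Real.sin |θ| = |Real.sin θ| := by
    rcases abs_choice θ with h | h
    · rw [h, _root_.abs_of_nonneg]
      apply Real.sin_nonneg_of_nonneg_of_le_pi
      · have := abs_nonneg θ; rw [h] at this; exact this
      · nlinarith [Real.pi_pos, hargpi, le_abs_self θ]
    · have hθle : θ ≤ 0 := by
        by_contra hc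
        push_neg at hc
        have := le_abs_self θ
        rw [h] at this; linarith
      have hsle : Real.sin θ ≤ 0 := by
        apply Real.sin_nonpos_of_nonpos_of_neg_pi_le hθle
        nlinarith [Real.pi_pos, neg_abs_le θ, hargpi]
      rw [h, Real.sin_neg, _root_.abs_of_nonpos hsle]
  have hsinlt : Real.sin |θ| < ε := by
    rw [hsinabs, hsinθ, _root_.abs_div, _root_.abs_of_pos habs, div_lt_iff₀ habs]
    exact hylt
  have hfinal : |θ| < Real.arcsin ε := by
    have h1 : Real.arcsin (Real.sin |θ|) = |θ| := by
      apply Real.arcsin_sin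
      · linarith [abs_nonneg θ, Real.pi_pos]
      · exact le_of_lt hargpi
    calc |θ| = Real.arcsin (Real.sin |θ|) := h1.symm
      _ < Real.arcsin ε := by
        apply Real.strictMonoOn_arcsin
        · exact ⟨by linarith [Real.neg_one_le_sin |θ|], Real.sin_le_one _⟩
        · exact ⟨by linarith, by linarith⟩
        · exact hsinlt
  refine ⟨‖W‖, θ, habs, hfinal, ?_⟩
  have hrec := Complex.norm_mul_exp_arg_mul_I W
  rw [← hθ] at hrec
  rw [mul_comm Complex.I (θ:ℂ), hrec]
  simp [hW]
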